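/- Every composition of quadratic spaces over a field F is similar to a composition of isometric quadratic spaces. Concretely, if C = ((V₁,q₁),(V₂,q₂),(V₃,q₃),*₃) is a composition, choose λ₁ represented by q₁ and λ₂ represented by q₂, set λ₃ = (λ₁λ₂)⁻¹, q̃ᵢ = λᵢ⁻¹qᵢ and x₁ *̃₃ x₂ = λ₃·(x₁ *₃ x₂); then C̃ = ((V₁,q̃₁),(V₂,q̃₂),(V₃,q̃₃),*̃₃) is a composition, (Id,Id,Id) : C → C̃ is a similitude with composition multiplier (λ₁,λ₂,λ₃), and q̃₁, q̃₂, q̃₃ are isometric Pfister forms. -/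

import Mathlib

open QuadraticMap Module

/-- A quadratic form is the norm form of a unital composition algebra; for
nondegenerate forms of dimension 1, 2, 4 or 8 this characterizes quadratic Pfister
forms in every characteristic. -/
def IsPfister {F V : Type*} [Field F] [AddCommGroup V] [Module F V]
    (Q : QuadraticForm F V) : Prop :=
  ∃ (mul : V →ₗ[F] V →ₗ[F] V) (e : V), Q e = 1 ∧
    (∀ x, mul e x = x) ∧ (∀ x, mul x e = x) ∧ ∀ x y, Q (mul x y) = Q x * Q y


private lemma polar_smul_form {F V : Type*} [Field F] [AddCommGroup V] [Module F V]
    (Q : QuadraticForm F V) (c : F) (x y : V) :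
    QuadraticMap.polar (c • Q) x y = c * QuadraticMap.polar Q x y := by
  simp [QuadraticMap.polar, QuadraticMap.smul_apply, smul_eq_mul]
  ring

private lemma isPfister_transfer {F V W : Type*} [Field F] [AddCommGroup V] [Module F V]
    [AddCommGroup W] [Module F W] (Q : QuadraticForm F V) (Q' : QuadraticForm F W)
    (g : V ≃ₗ[F] W) (hg : ∀ x, Q' (g x) = Q x) (h : IsPfister Q) : IsPfister Q' := by
  obtain ⟨mul, e, he, hel, her, hm⟩ := h
  refine ⟨LinearMap.mk₂ F (fun x y => g (mul (g.symm x) (g.symm y)))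
    (by intros; simp) (by intros; simp) (by intros; simp) (by intros; simp),
    g e, by rw [hg, he], ?_, ?_, ?_⟩
  · intro x
    simp [hel]
  · intro x
    simp [her]
  · intro x y
    simp only [LinearMap.mk₂_apply, hg, hm]
    rw [← hg (g.symm x), ← hg (g.symm y), g.apply_symm_apply, g.apply_symm_apply]

/-- Every composition of quadratic spaces is similar to a composition
of isometric quadratic spaces.  Concretely, if `λ₁` is represented by `q₁`, `λ₂` by
`q₂` and `λ₃ = (λ₁λ₂)⁻¹`, then setting `q̃ᵢ = λᵢ⁻¹ qᵢ`, `*̃₃ = λ₃·*₃` (with derived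
maps `*̃₁ = λ₁·*₁`, `*̃₂ = λ₂·*₂`) yields a composition `C̃`, the identity triple is a
similitude `C → C̃` with composition multiplier `(λ₁,λ₂,λ₃)`, and `q̃₁, q̃₂, q̃₃` are
isometric Pfister forms. -/
theorem statement10 {F V₁ V₂ V₃ : Type*} [Field F]
    [AddCommGroup V₁] [Module F V₁] [AddCommGroup V₂] [Module F V₂]
    [AddCommGroup V₃] [Module F V₃]
    [FiniteDimensional F V₁] [FiniteDimensional F V₂] [FiniteDimensional F V₃]
    (Q₁ : QuadraticForm F V₁) (Q₂ : QuadraticForm F V₂) (Q₃ : QuadraticForm F V₃)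
    (h₁ : ∀ x : V₁, (∀ y, polar Q₁ x y = 0) → x = 0)
    (h₂ : ∀ x : V₂, (∀ y, polar Q₂ x y = 0) → x = 0)
    (h₃ : ∀ x : V₃, (∀ y, polar Q₃ x y = 0) → x = 0)
    (hd₁₂ : finrank F V₁ = finrank F V₂) (hd₂₃ : finrank F V₂ = finrank F V₃)
    (m₃ : V₁ →ₗ[F] V₂ →ₗ[F] V₃)
    (hcomp : ∀ x₁ x₂, Q₃ (m₃ x₁ x₂) = Q₁ x₁ * Q₂ x₂)
    (m₁ : V₂ →ₗ[F] V₃ →ₗ[F] V₁)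
    (hadj₁ : ∀ x₁ x₂ x₃, polar Q₁ x₁ (m₁ x₂ x₃) = polar Q₃ x₃ (m₃ x₁ x₂))
    (m₂ : V₃ →ₗ[F] V₁ →ₗ[F] V₂)
    (hadj₂ : ∀ x₁ x₂ x₃, polar Q₂ x₂ (m₂ x₃ x₁) = polar Q₃ x₃ (m₃ x₁ x₂))
    -- scalars represented by q₁ and q₂, and λ₃ = (λ₁ λ₂)⁻¹
    (lam₁ lam₂ lam₃ : Fˣ)
    (hr₁ : ∃ x₁, Q₁ x₁ = (lam₁ : F)) (hr₂ : ∃ x₂, Q₂ x₂ = (lam₂ : F))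
    (hlam : lam₁ * lam₂ * lam₃ = 1)
    -- the rescaled forms and multiplication maps
    (Q₁' : QuadraticForm F V₁) (hQ₁' : Q₁' = ((lam₁ : F))⁻¹ • Q₁)
    (Q₂' : QuadraticForm F V₂) (hQ₂' : Q₂' = ((lam₂ : F))⁻¹ • Q₂)
    (Q₃' : QuadraticForm F V₃) (hQ₃' : Q₃' = ((lam₃ : F))⁻¹ • Q₃)
    (m₃' : V₁ →ₗ[F] V₂ →ₗ[F] V₃) (hm₃' : m₃' = (lam₃ : F) • m₃)
    (m₁' : V₂ →ₗ[F] V₃ →ₗ[F] V₁) (hm₁' : m₁' = (lam₁ : F) • m₁)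
    (m₂' : V₃ →ₗ[F] V₁ →ₗ[F] V₂) (hm₂' : m₂' = (lam₂ : F) • m₂) :
    -- C̃ is a composition of quadratic spaces
    (∀ x₁ x₂, Q₃' (m₃' x₁ x₂) = Q₁' x₁ * Q₂' x₂) ∧
    -- with derived maps m₁' and m₂'
    (∀ x₁ x₂ x₃, polar Q₁' x₁ (m₁' x₂ x₃) = polar Q₃' x₃ (m₃' x₁ x₂)) ∧
    (∀ x₁ x₂ x₃, polar Q₂' x₂ (m₂' x₃ x₁) = polar Q₃' x₃ (m₃' x₁ x₂)) ∧
    -- (Id, Id, Id) : C → C̃ is a similitude, with component multipliers λᵢ⁻¹ ...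
    (∀ x₁, Q₁' x₁ = ((lam₁ : F))⁻¹ * Q₁ x₁) ∧
    (∀ x₂, Q₂' x₂ = ((lam₂ : F))⁻¹ * Q₂ x₂) ∧
    (∀ x₃, Q₃' x₃ = ((lam₃ : F))⁻¹ * Q₃ x₃) ∧
    -- ... and composition multiplier (λ₁, λ₂, λ₃)
    (∀ x₁ x₂, (lam₃ : F) • m₃ x₁ x₂ = m₃' x₁ x₂) ∧
    (∀ x₂ x₃, (lam₁ : F) • m₁ x₂ x₃ = m₁' x₂ x₃) ∧
    (∀ x₃ x₁, (lam₂ : F) • m₂ x₃ x₁ = m₂' x₃ x₁) ∧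
    -- the rescaled forms are isometric Pfister forms
    QuadraticMap.Equivalent Q₁' Q₂' ∧ QuadraticMap.Equivalent Q₂' Q₃' ∧
    IsPfister Q₁' ∧ IsPfister Q₂' ∧ IsPfister Q₃' := by
  obtain ⟨a₁, ha₁⟩ := hr₁
  obtain ⟨a₂, ha₂⟩ := hr₂
  have hl1 : (lam₁ : F) ≠ 0 := lam₁.ne_zero
  have hl2 : (lam₂ : F) ≠ 0 := lam₂.ne_zero
  have hl3 : (lam₃ : F) ≠ 0 := lam₃.ne_zero
  have hlam' : (lam₁ : F) * lam₂ * lam₃ = 1 := by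
    have h0 : ((lam₁ * lam₂ * lam₃ : Fˣ) : F) = 1 := by rw [hlam]; rfl
    simpa [Units.val_mul] using h0
  -- linearizations of the composition law
  have lin₂ : ∀ (x : V₁) (a b : V₂), polar Q₃ (m₃ x a) (m₃ x b) = Q₁ x * polar Q₂ a b := by
    intro x a b
    simp only [QuadraticMap.polar, ← map_add, hcomp]
    ring
  have lin₁ : ∀ (a b : V₁) (y : V₂), polar Q₃ (m₃ a y) (m₃ b y) = polar Q₁ a b * Q₂ y := by
    intro a b y
    have h : m₃ a y + m₃ b y = m₃ (a + b) y := by rw [map_add]; rfl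
    simp only [QuadraticMap.polar, h, hcomp]
    ring
  -- key composition identities
  have keyB : ∀ (x₁ : V₁) (x₂ : V₂), m₂ (m₃ x₁ x₂) x₁ = Q₁ x₁ • x₂ := by
    intro x₁ x₂
    have h := h₂ (m₂ (m₃ x₁ x₂) x₁ - Q₁ x₁ • x₂) ?_
    · exact sub_eq_zero.mp h
    intro y
    rw [polar_sub_left, polar_smul_left, polar_comm (⇑Q₂) (m₂ (m₃ x₁ x₂) x₁) y,
      hadj₂ x₁ y (m₃ x₁ x₂), lin₂, polar_comm (⇑Q₂) x₂ y, smul_eq_mul]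
    ring
  have keyC : ∀ (x₁ : V₁) (x₂ : V₂), m₁ x₂ (m₃ x₁ x₂) = Q₂ x₂ • x₁ := by
    intro x₁ x₂
    have h := h₁ (m₁ x₂ (m₃ x₁ x₂) - Q₂ x₂ • x₁) ?_
    · exact sub_eq_zero.mp h
    intro y
    rw [polar_sub_left, polar_smul_left, polar_comm (⇑Q₁) (m₁ x₂ (m₃ x₁ x₂)) y,
      hadj₁ y x₂ (m₃ x₁ x₂), lin₁, polar_comm (⇑Q₁) x₁ y, smul_eq_mul]
    ring
  -- the two similitudes are injective
  have hLinj : Function.Injective (m₃ a₁) := by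
    intro x y hxy
    have hx := keyB a₁ x
    have hy := keyB a₁ y
    rw [ha₁] at hx hy
    rw [hxy] at hx
    exact smul_right_injective V₂ hl1 (hx ▸ hy ▸ rfl : (lam₁ : F) • x = (lam₁ : F) • y)
  have hRinj : Function.Injective (m₃.flip a₂) := by
    intro x y hxy
    simp only [LinearMap.flip_apply] at hxy
    have hx := keyC x a₂
    have hy := keyC y a₂
    rw [ha₂] at hx hy
    rw [hxy] at hx
    exact smul_right_injective V₁ hl2 (hx ▸ hy ▸ rfl : (lam₂ : F) • x = (lam₂ : F) • y)
  -- and hence bijective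
  let Le : V₂ ≃ₗ[F] V₃ := (m₃ a₁).linearEquivOfInjective hLinj hd₂₃
  let Re : V₁ ≃ₗ[F] V₃ := (m₃.flip a₂).linearEquivOfInjective hRinj (hd₁₂.trans hd₂₃)
  have hLe : ∀ x, Le x = m₃ a₁ x := fun x =>
    (m₃ a₁).linearEquivOfInjective_apply hLinj hd₂₃ x
  have hRe : ∀ x, Re x = m₃ x a₂ := fun x =>
    (m₃.flip a₂).linearEquivOfInjective_apply hRinj (hd₁₂.trans hd₂₃) x
  have hQ3Le : ∀ x, Q₃ (Le x) = (lam₁ : F) * Q₂ x := by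
    intro x; rw [hLe, hcomp, ha₁]
  have hQ3Re : ∀ x, Q₃ (Re x) = (lam₂ : F) * Q₁ x := by
    intro x; rw [hRe, hcomp, ha₂]; ring
  have hQ2Ls : ∀ y, Q₂ (Le.symm y) = (lam₁ : F)⁻¹ * Q₃ y := by
    intro y
    have h := hQ3Le (Le.symm y)
    rw [Le.apply_symm_apply] at h
    rw [h]
    field_simp
  have hQ1Rs : ∀ y, Q₁ (Re.symm y) = (lam₂ : F)⁻¹ * Q₃ y := by
    intro y
    have h := hQ3Re (Re.symm y)
    rw [Re.apply_symm_apply] at h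
    rw [h]
    field_simp
  have equiv12 : QuadraticMap.Equivalent Q₁' Q₂' := by
    refine ⟨⟨Re.trans Le.symm, ?_⟩⟩
    intro x
    show Q₂' (Le.symm (Re x)) = Q₁' x
    rw [hQ₂', hQ₁', QuadraticMap.smul_apply, QuadraticMap.smul_apply, hQ2Ls, hQ3Re,
      smul_eq_mul, smul_eq_mul]
    field_simp
  have equiv23 : QuadraticMap.Equivalent Q₂' Q₃' := by
    refine ⟨⟨Le.trans (LinearEquiv.smulOfNeZero F V₃ (lam₃ : F) hl3), ?_⟩⟩
    intro x
    show Q₃' ((lam₃ : F) • Le x) = Q₂' x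
    rw [hQ₃', hQ₂', QuadraticMap.smul_apply, QuadraticMap.smul_apply,
      QuadraticMap.map_smul, hQ3Le, smul_eq_mul, smul_eq_mul, smul_eq_mul]
    field_simp
    linear_combination Q₂ x * hlam'
  have pf2 : IsPfister Q₂' := by
    refine ⟨LinearMap.mk₂ F (fun x y => Le.symm (m₃ (Re.symm (Le x)) y))
      (by intro x x' y; simp) (by intro c x y; simp)
      (by intro x y y'; simp) (by intro c x y; simp), a₂, ?_, ?_, ?_, ?_⟩
    · rw [hQ₂', QuadraticMap.smul_apply, ha₂, smul_eq_mul, inv_mul_cancel₀ hl2]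
    · intro y
      have h1 : Re.symm (Le a₂) = a₁ := by
        rw [LinearEquiv.symm_apply_eq, hRe, hLe]
      simp only [LinearMap.mk₂_apply, h1]
      rw [← hLe, Le.symm_apply_apply]
    · intro x
      have h1 : m₃ (Re.symm (Le x)) a₂ = Le x := by
        rw [← hRe, Re.apply_symm_apply]
      simp only [LinearMap.mk₂_apply, h1, Le.symm_apply_apply]
    · intro x y
      simp only [LinearMap.mk₂_apply]
      rw [hQ₂', QuadraticMap.smul_apply, QuadraticMap.smul_apply,
        QuadraticMap.smul_apply, hQ2Ls, hcomp, hQ1Rs, hQ3Le, smul_eq_mul,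
        smul_eq_mul, smul_eq_mul]
      field_simp
  have pf1 : IsPfister Q₁' := by
    refine isPfister_transfer Q₂' Q₁' (Le.trans Re.symm) ?_ pf2
    intro x
    rw [hQ₁', hQ₂', QuadraticMap.smul_apply, QuadraticMap.smul_apply, smul_eq_mul,
      smul_eq_mul]
    show (lam₁ : F)⁻¹ * Q₁ (Re.symm (Le x)) = (lam₂ : F)⁻¹ * Q₂ x
    rw [hQ1Rs, hQ3Le]
    field_simp
  have pf3 : IsPfister Q₃' := by
    refine isPfister_transfer Q₂' Q₃'
      (Le.trans (LinearEquiv.smulOfNeZero F V₃ (lam₃ : F) hl3)) ?_ pf2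
    intro x
    show Q₃' ((lam₃ : F) • Le x) = Q₂' x
    rw [hQ₃', hQ₂', QuadraticMap.smul_apply, QuadraticMap.smul_apply,
      QuadraticMap.map_smul, hQ3Le, smul_eq_mul, smul_eq_mul, smul_eq_mul]
    field_simp
    linear_combination Q₂ x * hlam'
  refine ⟨?_, ?_, ?_, ?_, ?_, ?_, ?_, ?_, ?_, equiv12, equiv23, pf1, pf2, pf3⟩
  · intro x y
    rw [hm₃', hQ₃', hQ₁', hQ₂']
    simp only [LinearMap.smul_apply, QuadraticMap.smul_apply, QuadraticMap.map_smul,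
      hcomp, smul_eq_mul]
    field_simp
    linear_combination (Q₁ x * Q₂ y) * hlam'
  · intro x y z
    rw [hm₁', hm₃', hQ₁', hQ₃', polar_smul_form, polar_smul_form]
    simp only [LinearMap.smul_apply, polar_smul_right, smul_eq_mul]
    rw [hadj₁]
    field_simp
  · intro x y z
    rw [hm₂', hm₃', hQ₂', hQ₃', polar_smul_form, polar_smul_form]
    simp only [LinearMap.smul_apply, polar_smul_right, smul_eq_mul]
    rw [hadj₂]
    field_simp
  · intro x; rw [hQ₁', QuadraticMap.smul_apply, smul_eq_mul]
  · intro x; rw [hQ₂', QuadraticMap.smul_apply, smul_eq_mul]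
  · intro x; rw [hQ₃', QuadraticMap.smul_apply, smul_eq_mul]
  · intro x y; rw [hm₃']; simp only [LinearMap.smul_apply]
  · intro x y; rw [hm₁']; simp only [LinearMap.smul_apply]
  · intro x y; rw [hm₂']; simp only [LinearMap.smul_apply]
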